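/- Let D=(Ω,B) be a supersimple 2-(n,4,λ) design. Writing x^g for the image of a point x under a permutation g, the following are equivalent: (i) for all a,b,c,d ∈ Ω, [c,d]⁻¹[a,b][c,d] = [a^{[c,d]}, b^{[c,d]}]; (ii) for all a,b,c ∈ Ω, [b,c]⁻¹[a,b][b,c] = [a^{[b,c]}, c]; (iii) for all a,b,c ∈ Ω, [b,c] = [a,b]·[b,c]·[a^{[b,c]}, c]. Moreover, if these conditions hold, then for any ∞ ∈ Ω the Conway groupoid L_∞(D) is a subgroup of Sym(Ω), and every element of L_∞(D) maps lines of D to lines of D (i.e., L_∞(D) is a group of automorphisms of D). -/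

import Mathlib

open Equiv

variable {Ω : Type*}

/-- `(Ω, B)` is a `2-(n,4,lam)` design: `Ω` has `n` points, every line has 4 points,
and every 2-element subset of `Ω` is contained in exactly `lam` lines. -/
def IsDesign [Fintype Ω] (B : Set (Finset Ω)) (n lam : ℕ) : Prop :=
  Fintype.card Ω = n ∧
  (∀ L ∈ B, L.card = 4) ∧
  (∀ p : Finset Ω, p.card = 2 → {L ∈ B | p ⊆ L}.ncard = lam)

/-- A design is supersimple if any two distinct lines intersect in at most two points. -/
def Supersimple [DecidableEq Ω] (B : Set (Finset Ω)) : Prop :=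
  ∀ L₁ ∈ B, ∀ L₂ ∈ B, L₁ ≠ L₂ → (L₁ ∩ L₂).card ≤ 2

/-- Condition (△): the symmetric difference of two lines meeting in two points is a line. -/
def SymmDiffCond [DecidableEq Ω] (B : Set (Finset Ω)) : Prop :=
  ∀ L₁ ∈ B, ∀ L₂ ∈ B, (L₁ ∩ L₂).card = 2 → symmDiff L₁ L₂ ∈ B

/-- The collinear triples: 3-element subsets contained in some line. -/
def collinearTriples (B : Set (Finset Ω)) : Set (Finset Ω) :=
  { t | t.card = 3 ∧ ∃ L ∈ B, t ⊆ L }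

/-- `(Ω, C)` is a regular two-graph: `C` is a set of 3-element subsets, every 2-element
subset lies in exactly `μ` members of `C` for a constant `μ`, and every 4-element subset
contains exactly 0, 2 or 4 members of `C`. -/
def IsRegularTwoGraph (C : Set (Finset Ω)) : Prop :=
  (∀ t ∈ C, t.card = 3) ∧
  (∃ μ : ℕ, ∀ p : Finset Ω, p.card = 2 → {t ∈ C | p ⊆ t}.ncard = μ) ∧
  (∀ q : Finset Ω, q.card = 4 →
    {t ∈ C | t ⊆ q}.ncard = 0 ∨ {t ∈ C | t ⊆ q}.ncard = 2 ∨ {t ∈ C | t ⊆ q}.ncard = 4)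

/-- `mv a b` is the elementary move `[a,b]`: it is the identity when `a = b`; when `a ≠ b`
it interchanges `a` and `b`, interchanges `x` and `y` whenever `{a,b,x,y}` is a line, and
fixes every point not collinear with `a, b`. -/
def IsElemMoveFn [DecidableEq Ω] (B : Set (Finset Ω)) (mv : Ω → Ω → Equiv.Perm Ω) : Prop :=
  (∀ a, mv a a = 1) ∧
  ∀ a b : Ω, a ≠ b →
    mv a b a = b ∧ mv a b b = a ∧
    (∀ x y : Ω, ({a, b, x, y} : Finset Ω) ∈ B → mv a b x = y) ∧
    (∀ x : Ω, x ≠ a → x ≠ b → (∀ L ∈ B, ¬(a ∈ L ∧ b ∈ L ∧ x ∈ L)) → mv a b x = x)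

/-- The move sequence `[a, b₁, …, b_k] = [a,b₁][b₁,b₂]⋯[b_{k-1},b_k]`; the factors are
applied left-to-right (so in Lean's convention the product is reversed). -/
def moveSeq (mv : Ω → Ω → Equiv.Perm Ω) : Ω → List Ω → Equiv.Perm Ω
  | _, [] => 1
  | a, b :: l => moveSeq mv b l * mv a b

/-- The Conway groupoid `L_x(D)`: all move sequences starting at `x`. -/
def ConwayGroupoid (mv : Ω → Ω → Equiv.Perm Ω) (x : Ω) : Set (Equiv.Perm Ω) :=
  { g | ∃ l : List Ω, g = moveSeq mv x l }

/-- The hole stabilizer `π_x(D)`: all move sequences starting and ending at `x`. -/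
def holeStabilizer (mv : Ω → Ω → Equiv.Perm Ω) (x : Ω) : Set (Equiv.Perm Ω) :=
  { g | ∃ l : List Ω, g = moveSeq mv x (l ++ [x]) }

/-- `L(D)`: the set of all move sequences. -/
def allMoveSeqs (mv : Ω → Ω → Equiv.Perm Ω) : Set (Equiv.Perm Ω) :=
  { g | ∃ (a : Ω) (l : List Ω), g = moveSeq mv a l }

/-- The set `E` of elementary moves `[a,b]` with `a ≠ b`. -/
def elemMoves (mv : Ω → Ω → Equiv.Perm Ω) : Set (Equiv.Perm Ω) :=
  { g | ∃ a b : Ω, a ≠ b ∧ g = mv a b }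

/-- `\overline{x,y}`: the set of points lying on a common line with `x` and `y`. -/
def lineJoin (B : Set (Finset Ω)) (x y : Ω) : Set Ω :=
  { z | ∃ L ∈ B, x ∈ L ∧ y ∈ L ∧ z ∈ L }

/-- A set `G` of permutations is transitive on `S`. -/
def SetTransitiveOn (G : Set (Equiv.Perm Ω)) (S : Set Ω) : Prop :=
  ∀ x ∈ S, ∀ y ∈ S, ∃ g ∈ G, g x = y

/-- `Δ` is a block for the set `G` of permutations. -/
def SetIsBlock (G : Set (Equiv.Perm Ω)) (Δ : Set Ω) : Prop :=
  ∀ g ∈ G, (⇑g) '' Δ = Δ ∨ Disjoint ((⇑g) '' Δ) Δ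

/-- A set `G` of permutations is primitive on `S`: it is transitive on `S` and every
block contained in `S` is trivial (equivalently, the only invariant partitions are the
partition into singletons and the one-part partition). -/
def SetPrimitiveOn (G : Set (Equiv.Perm Ω)) (S : Set Ω) : Prop :=
  SetTransitiveOn G S ∧
  ∀ Δ : Set Ω, Δ ⊆ S → SetIsBlock G Δ → Δ.Subsingleton ∨ Δ = S

/-- Primitivity on all of `Ω`. -/
def SetPrimitive (G : Set (Equiv.Perm Ω)) : Prop :=
  SetPrimitiveOn G Set.univ

/-- `(G, E)` is a 3-transposition group: `G` is the group generated by `E`, `E` is a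
union of `G`-conjugacy classes of involutions, and any product of two members of `E`
has order 1, 2 or 3. -/
def Is3TranspositionGroup (G E : Set (Equiv.Perm Ω)) : Prop :=
  ((Subgroup.closure E : Subgroup (Equiv.Perm Ω)) : Set (Equiv.Perm Ω)) = G ∧
  (∀ e ∈ E, orderOf e = 2) ∧
  (∀ g ∈ G, ∀ e ∈ E, g * e * g⁻¹ ∈ E) ∧
  (∀ g ∈ E, ∀ h ∈ E, orderOf (g * h) = 1 ∨ orderOf (g * h) = 2 ∨ orderOf (g * h) = 3)

/-- Two designs are isomorphic: a bijection of the point sets carrying lines to lines. -/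
def DesignIso {Ω₁ Ω₂ : Type*} (B₁ : Set (Finset Ω₁)) (B₂ : Set (Finset Ω₂)) : Prop :=
  ∃ e : Ω₁ ≃ Ω₂, ∀ L : Finset Ω₁, L ∈ B₁ ↔ L.map e.toEmbedding ∈ B₂

/-- The lines of the Boolean quadruple system of order `2^m`: 4-subsets of `F_2^m`
summing to zero. -/
def booleanLines (m : ℕ) : Set (Finset (Fin m → ZMod 2)) :=
  { L | L.card = 4 ∧ ∑ v ∈ L, v = 0 }

/-- `V = F_2^{2m}`, with coordinates indexed by `Fin m ⊕ Fin m`. -/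
abbrev Vsp (m : ℕ) := (Fin m ⊕ Fin m) → ZMod 2

/-- `θ(u) = u e uᵀ` where `e` is the block matrix `(0 I; 0 0)`. -/
def theta {m : ℕ} (u : Vsp m) : ZMod 2 :=
  ∑ i : Fin m, u (Sum.inl i) * u (Sum.inr i)

/-- The lines of the design `D^a`: 4-subsets of `V` summing to zero on which `θ` sums
to zero. -/
def linesA (m : ℕ) : Set (Finset (Vsp m)) :=
  { L | L.card = 4 ∧ ∑ v ∈ L, v = 0 ∧ ∑ v ∈ L, theta v = 0 }

/-- The lines of the design `D^ε`: 4-subsets of `{v ∈ V : θ(v) = ε}` summing to zero. -/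
def linesEps (m : ℕ) (ε : ZMod 2) : Set (Finset {v : Vsp m // theta v = ε}) :=
  { L | L.card = 4 ∧ ∑ v ∈ L, (v : Vsp m) = 0 }

/-- The derived graph `G_{D,∞}`: vertices are the points other than `∞`, with `a, b`
adjacent iff `{∞,a,b}` is a collinear triple. -/
def derivedGraph [DecidableEq Ω] (B : Set (Finset Ω)) (inf : Ω) :
    SimpleGraph {x : Ω // x ≠ inf} where
  Adj a b := a ≠ b ∧ ({inf, (a : Ω), (b : Ω)} : Finset Ω) ∈ collinearTriples B
  symm := by
    constructor
    rintro a b ⟨hab, h⟩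
    exact ⟨hab.symm, by rwa [Finset.pair_comm (b : Ω) (a : Ω)]⟩
  loopless := by constructor; rintro a ⟨h, -⟩; exact h rfl

/-- `w` witnesses the triangle property for the edge `{u,v}`: `w` is a common neighbour
of `u` and `v`, and every other vertex is adjacent to exactly one or three of `u,v,w`. -/
def TriangleWitness {V : Type*} (G : SimpleGraph V) (u v w : V) : Prop :=
  G.Adj u w ∧ G.Adj v w ∧
  ∀ x : V, x ∉ ({u, v, w} : Set V) →
    ({y ∈ ({u, v, w} : Set V) | G.Adj x y}.ncard = 1 ∨
     {y ∈ ({u, v, w} : Set V) | G.Adj x y}.ncard = 3)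

/-- The triangle property for a graph. -/
def HasTriangleProperty {V : Type*} (G : SimpleGraph V) : Prop :=
  (∃ u v, G.Adj u v) ∧ ∀ u v : V, G.Adj u v → ∃ w, TriangleWitness G u v w

/-- The strong triangle property: each edge has a unique triangle-property witness. -/
def HasStrongTriangleProperty {V : Type*} (G : SimpleGraph V) : Prop :=
  (∃ u v, G.Adj u v) ∧ ∀ u v : V, G.Adj u v → ∃! w, TriangleWitness G u v w

/-- A coherent 4-subset: all four of its 3-element subsets lie in `C`. -/
def IsCoherent (C : Set (Finset Ω)) (q : Finset Ω) : Prop :=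
  q.card = 4 ∧ ∀ t ⊆ q, t.card = 3 → t ∈ C
section AuxMoveLemmas

variable [DecidableEq Ω] {B : Set (Finset Ω)} {mv : Ω → Ω → Equiv.Perm Ω}

/-- Endpoint of a move sequence `x :: l`. -/
def endPt {α : Type*} (x : α) : List α → α
  | [] => x
  | b :: l => endPt b l

lemma mv_fst (hmv : IsElemMoveFn B mv) (a b : Ω) : mv a b a = b := by
  by_cases hab : a = b
  · subst hab; rw [hmv.1]; rfl
  · exact (hmv.2 a b hab).1

lemma mv_line (hmv : IsElemMoveFn B mv) {a b : Ω} (hab : a ≠ b) {x y : Ω}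
    (h : ({a, b, x, y} : Finset Ω) ∈ B) : mv a b x = y :=
  (hmv.2 a b hab).2.2.1 x y h

lemma fourth_point (hB4 : ∀ L ∈ B, L.card = 4) {L : Finset Ω} (hL : L ∈ B)
    {a b x : Ω} (ha : a ∈ L) (hb : b ∈ L) (hx : x ∈ L)
    (hab : a ≠ b) (hax : a ≠ x) (hbx : b ≠ x) :
    ∃ y, L = {a, b, x, y} ∧ y ∉ ({a, b, x} : Finset Ω) := by
  have ht : ({a, b, x} : Finset Ω) ⊆ L := by
    intro z hz
    simp only [Finset.mem_insert, Finset.mem_singleton] at hz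
    rcases hz with rfl | rfl | rfl <;> assumption
  have hcard : ({a, b, x} : Finset Ω).card = 3 := by
    rw [Finset.card_insert_of_notMem (by simp [hab, hax]),
        Finset.card_insert_of_notMem (by simp [hbx]), Finset.card_singleton]
  have h1 : (L \ {a, b, x}).card = 1 := by
    rw [Finset.card_sdiff_of_subset ht, hB4 L hL, hcard]
  obtain ⟨y, hy⟩ := Finset.card_eq_one.mp h1
  have hyL : y ∈ L \ ({a, b, x} : Finset Ω) := by rw [hy]; simp
  refine ⟨y, ?_, (Finset.mem_sdiff.mp hyL).2⟩
  have hun : ({a, b, x} : Finset Ω) ∪ L \ {a, b, x} = L :=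
    Finset.union_sdiff_of_subset ht
  rw [hy] at hun
  rw [← hun]
  ext z
  simp only [Finset.mem_union, Finset.mem_insert, Finset.mem_singleton]
  tauto

lemma mv_sq (hmv : IsElemMoveFn B mv) (hB4 : ∀ L ∈ B, L.card = 4) (a b : Ω) :
    mv a b * mv a b = 1 := by
  by_cases hab : a = b
  · subst hab; rw [hmv.1]; simp
  ext x
  simp only [Perm.mul_apply, Perm.one_apply]
  by_cases hxa : x = a
  · subst hxa; rw [(hmv.2 x b hab).1, (hmv.2 x b hab).2.1]
  by_cases hxb : x = b
  · subst hxb; rw [(hmv.2 a x hab).2.1, (hmv.2 a x hab).1]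
  by_cases hline : ∃ L ∈ B, a ∈ L ∧ b ∈ L ∧ x ∈ L
  · obtain ⟨L, hL, haL, hbL, hxL⟩ := hline
    obtain ⟨y, hLeq, hy⟩ := fourth_point hB4 hL haL hbL hxL hab (Ne.symm hxa) (Ne.symm hxb)
    have hB1 : ({a, b, x, y} : Finset Ω) ∈ B := by rw [← hLeq]; exact hL
    have hB2 : ({a, b, y, x} : Finset Ω) ∈ B := by
      have he : ({a, b, y, x} : Finset Ω) = ({a, b, x, y} : Finset Ω) := by
        ext z
        simp only [Finset.mem_insert, Finset.mem_singleton]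
        tauto
      rw [he]; exact hB1
    rw [mv_line hmv hab hB1, mv_line hmv hab hB2]
  · have hfix := (hmv.2 a b hab).2.2.2 x hxa hxb (fun L hL hm => hline ⟨L, hL, hm⟩)
    rw [hfix, hfix]

lemma mv_inv (hmv : IsElemMoveFn B mv) (hB4 : ∀ L ∈ B, L.card = 4) (a b : Ω) :
    (mv a b)⁻¹ = mv a b :=
  inv_eq_of_mul_eq_one_right (mv_sq hmv hB4 a b)

lemma mv_symm (hmv : IsElemMoveFn B mv) (hB4 : ∀ L ∈ B, L.card = 4) (a b : Ω) :
    mv a b = mv b a := by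
  by_cases hab : a = b
  · subst hab; rfl
  have hba : b ≠ a := Ne.symm hab
  ext x
  by_cases hxa : x = a
  · subst hxa; rw [(hmv.2 x b hab).1, (hmv.2 b x hba).2.1]
  by_cases hxb : x = b
  · subst hxb; rw [(hmv.2 a x hab).2.1, (hmv.2 x a hba).1]
  by_cases hline : ∃ L ∈ B, a ∈ L ∧ b ∈ L ∧ x ∈ L
  · obtain ⟨L, hL, haL, hbL, hxL⟩ := hline
    obtain ⟨y, hLeq, hy⟩ := fourth_point hB4 hL haL hbL hxL hab (Ne.symm hxa) (Ne.symm hxb)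
    have hB1 : ({a, b, x, y} : Finset Ω) ∈ B := by rw [← hLeq]; exact hL
    have hB2 : ({b, a, x, y} : Finset Ω) ∈ B := by
      have he : ({b, a, x, y} : Finset Ω) = ({a, b, x, y} : Finset Ω) := by
        ext z
        simp only [Finset.mem_insert, Finset.mem_singleton]
        tauto
      rw [he]; exact hB1
    rw [mv_line hmv hab hB1, mv_line hmv hba hB2]
  · rw [(hmv.2 a b hab).2.2.2 x hxa hxb (fun L hL hm => hline ⟨L, hL, hm⟩),
        (hmv.2 b a hba).2.2.2 x hxb hxa (fun L hL hm => hline ⟨L, hL, hm.2.1, hm.1, hm.2.2⟩)]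

lemma moveSeq_apply_start (hmv : IsElemMoveFn B mv) :
    ∀ (l : List Ω) (x : Ω), moveSeq mv x l x = endPt x l
  | [], x => rfl
  | b :: l, x => by
    simp only [moveSeq, Perm.mul_apply, mv_fst hmv x b, endPt]
    exact moveSeq_apply_start hmv l b

lemma moveSeq_append (mv : Ω → Ω → Equiv.Perm Ω) :
    ∀ (l l₂ : List Ω) (x : Ω),
      moveSeq mv x (l ++ l₂) = moveSeq mv (endPt x l) l₂ * moveSeq mv x l
  | [], l₂, x => by simp [moveSeq, endPt]
  | b :: l, l₂, x => by
    simp only [List.cons_append, moveSeq, endPt]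
    rw [moveSeq_append mv l l₂ b, mul_assoc]

lemma conj_elem
    (h1 : ∀ a b c d : Ω, mv c d * mv a b * (mv c d)⁻¹ = mv (mv c d a) (mv c d b)) :
    ∀ (l : List Ω) (x a b : Ω),
      moveSeq mv x l * mv a b * (moveSeq mv x l)⁻¹
        = mv (moveSeq mv x l a) (moveSeq mv x l b)
  | [], x, a, b => by simp [moveSeq]
  | c :: l, x, a, b => by
    show moveSeq mv c l * mv x c * mv a b * (moveSeq mv c l * mv x c)⁻¹ = _
    rw [mul_inv_rev]
    calc moveSeq mv c l * mv x c * mv a b * ((mv x c)⁻¹ * (moveSeq mv c l)⁻¹)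
        = moveSeq mv c l * (mv x c * mv a b * (mv x c)⁻¹) * (moveSeq mv c l)⁻¹ := by
          group
      _ = moveSeq mv c l * mv (mv x c a) (mv x c b) * (moveSeq mv c l)⁻¹ := by
          rw [h1]
      _ = mv (moveSeq mv c l (mv x c a)) (moveSeq mv c l (mv x c b)) :=
          conj_elem h1 l c _ _
      _ = mv ((moveSeq mv c l * mv x c) a) ((moveSeq mv c l * mv x c) b) := by
          simp [Perm.mul_apply]

lemma conj_seq
    (h1 : ∀ a b c d : Ω, mv c d * mv a b * (mv c d)⁻¹ = mv (mv c d a) (mv c d b))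
    (l : List Ω) (x : Ω) :
    ∀ (m : List Ω) (y : Ω),
      moveSeq mv x l * moveSeq mv y m * (moveSeq mv x l)⁻¹
        = moveSeq mv (moveSeq mv x l y) (m.map ⇑(moveSeq mv x l)) := by
  intro m
  induction m with
  | nil => intro y; simp [moveSeq]
  | cons b m ih =>
    intro y
    show moveSeq mv x l * (moveSeq mv b m * mv y b) * (moveSeq mv x l)⁻¹ = _
    rw [List.map_cons]
    show _ = moveSeq mv (moveSeq mv x l b) (m.map ⇑(moveSeq mv x l))
            * mv (moveSeq mv x l y) (moveSeq mv x l b)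
    rw [← ih b, ← conj_elem h1 l x y b]
    group

lemma elem_preserves (hmv : IsElemMoveFn B mv) (hB4 : ∀ L ∈ B, L.card = 4)
    (h1 : ∀ a b c d : Ω, mv c d * mv a b * (mv c d)⁻¹ = mv (mv c d a) (mv c d b))
    (c d : Ω) {L : Finset Ω} (hL : L ∈ B) : L.image ⇑(mv c d) ∈ B := by
  by_cases hcd : c = d
  · subst hcd; rw [hmv.1]; simpa using hL
  obtain ⟨p, hp, q, hq, hpq⟩ := Finset.one_lt_card.mp
    (by rw [hB4 L hL]; norm_num : 1 < L.card)
  have hsub : ({p, q} : Finset Ω) ⊆ L := by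
    intro z hz
    simp only [Finset.mem_insert, Finset.mem_singleton] at hz
    rcases hz with rfl | rfl <;> assumption
  have hM : (L \ {p, q}).card = 2 := by
    rw [Finset.card_sdiff_of_subset hsub, hB4 L hL, Finset.card_pair hpq]
  obtain ⟨r, s, hrs, hMeq⟩ := Finset.card_eq_two.mp hM
  have hrM : r ∈ L \ ({p, q} : Finset Ω) := by rw [hMeq]; simp
  have hsM : s ∈ L \ ({p, q} : Finset Ω) := by rw [hMeq]; simp
  obtain ⟨hrL, hrpq⟩ := Finset.mem_sdiff.mp hrM
  obtain ⟨hsL, hspq⟩ := Finset.mem_sdiff.mp hsM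
  simp only [Finset.mem_insert, Finset.mem_singleton, not_or] at hrpq hspq
  have hLps : L = {p, q, r, s} := by
    have hun : ({p, q} : Finset Ω) ∪ L \ {p, q} = L := Finset.union_sdiff_of_subset hsub
    rw [hMeq] at hun
    rw [← hun]
    ext z
    simp only [Finset.mem_union, Finset.mem_insert, Finset.mem_singleton]
    tauto
  have hlineB : ({p, q, r, s} : Finset Ω) ∈ B := by rw [← hLps]; exact hL
  have hline : mv p q r = s := mv_line hmv hpq hlineB
  have happ : mv (mv c d p) (mv c d q) (mv c d r) = mv c d s := by
    rw [← h1 p q c d]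
    simp only [Perm.mul_apply, Perm.inv_def, Equiv.symm_apply_apply]
    rw [hline]
  have hgpq : mv c d p ≠ mv c d q := fun h => hpq ((mv c d).injective h)
  have hgpr : mv c d p ≠ mv c d r := fun h => hrpq.1 ((mv c d).injective h).symm
  have hgqr : mv c d q ≠ mv c d r := fun h => hrpq.2 ((mv c d).injective h).symm
  have hgrs : mv c d s ≠ mv c d r := fun h => hrs ((mv c d).injective h).symm
  by_cases hex : ∃ L' ∈ B, mv c d p ∈ L' ∧ mv c d q ∈ L' ∧ mv c d r ∈ L'
  · obtain ⟨L', hL', hp', hq', hr'⟩ := hex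
    obtain ⟨w, hL'eq, hw⟩ := fourth_point hB4 hL' hp' hq' hr' hgpq hgpr hgqr
    have hB' : ({mv c d p, mv c d q, mv c d r, w} : Finset Ω) ∈ B := by
      rw [← hL'eq]; exact hL'
    have hws : w = mv c d s := (mv_line hmv hgpq hB').symm.trans happ
    have himg : L.image ⇑(mv c d) = L' := by
      rw [hLps, hL'eq, hws]
      simp [Finset.image_insert]
    rw [himg]; exact hL'
  · have hfix := (hmv.2 (mv c d p) (mv c d q) hgpq).2.2.2 (mv c d r)
      (Ne.symm hgpr) (Ne.symm hgqr) (fun L' hL' hm => hex ⟨L', hL', hm⟩)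
    rw [happ] at hfix
    exact absurd hfix hgrs

lemma seq_preserves (hmv : IsElemMoveFn B mv) (hB4 : ∀ L ∈ B, L.card = 4)
    (h1 : ∀ a b c d : Ω, mv c d * mv a b * (mv c d)⁻¹ = mv (mv c d a) (mv c d b)) :
    ∀ (l : List Ω) (x : Ω) (L : Finset Ω), L ∈ B → L.image ⇑(moveSeq mv x l) ∈ B
  | [], x, L, hL => by simpa [moveSeq] using hL
  | b :: l, x, L, hL => by
    show L.image ⇑(moveSeq mv b l * mv x b) ∈ B
    rw [show (⇑(moveSeq mv b l * mv x b)) = ⇑(moveSeq mv b l) ∘ ⇑(mv x b) from rfl,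
        ← Finset.image_image]
    exact seq_preserves hmv hB4 h1 l b _ (elem_preserves hmv hB4 h1 x b hL)

end AuxMoveLemmas

/-- Lemma 2.8: for a supersimple `2-(n,4,λ)` design the following are
equivalent (writing `x^g` for the image of `x` under `g`, so the conjugate of `[a,b]`
by `g` is the permutation sending `x^g ↦ ...`):
(i) the conjugate of `[a,b]` by `[c,d]` is `[a^{[c,d]}, b^{[c,d]}]` for all `a,b,c,d`;
(ii) the conjugate of `[a,b]` by `[b,c]` is `[a^{[b,c]}, c]` for all `a,b,c`;
(iii) `[b,c] = [a,b]·[b,c]·[a^{[b,c]},c]` for all `a,b,c` (factors applied left to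
right). If these hold, then for any `∞` the Conway groupoid `L_∞(D)` is a subgroup of
`Sym(Ω)` all of whose elements map lines to lines. -/
theorem elemMove_conj_tfae [Fintype Ω] [DecidableEq Ω]
    {B : Set (Finset Ω)} {n lam : ℕ}
    (hD : IsDesign B n lam) (hss : Supersimple B)
    (mv : Ω → Ω → Equiv.Perm Ω) (hmv : IsElemMoveFn B mv) :
    ((∀ a b c d : Ω, mv c d * mv a b * (mv c d)⁻¹ = mv (mv c d a) (mv c d b)) ↔
     (∀ a b c : Ω, mv b c * mv a b * (mv b c)⁻¹ = mv (mv b c a) c)) ∧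
    ((∀ a b c : Ω, mv b c * mv a b * (mv b c)⁻¹ = mv (mv b c a) c) ↔
     (∀ a b c : Ω, mv b c = mv (mv b c a) c * mv b c * mv a b)) ∧
    ((∀ a b c d : Ω, mv c d * mv a b * (mv c d)⁻¹ = mv (mv c d a) (mv c d b)) →
      ∀ inf : Ω,
        (∃ H : Subgroup (Equiv.Perm Ω),
          (H : Set (Equiv.Perm Ω)) = ConwayGroupoid mv inf) ∧
        ∀ g ∈ ConwayGroupoid mv inf, ∀ L ∈ B, L.image (⇑g) ∈ B) := by
  have hB4 : ∀ L ∈ B, L.card = 4 := hD.2.1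
  have hq' := mv_sq hmv hB4
  have hi := mv_inv hmv hB4
  have hs := mv_symm hmv hB4
  refine ⟨⟨?_, ?_⟩, ⟨?_, ?_⟩, ?_⟩
  · -- (i) → (ii)
    intro h1 a b c
    rw [h1 a b b c, mv_fst hmv b c]
  · -- (ii) → (i)
    intro h2 a b c d
    have F1 := h2 a b c
    rw [hi b c] at F1
    have hab : mv a b = mv b c * mv (mv b c a) c * mv b c := by
      rw [← F1]
      calc mv a b = mv b c * mv b c * mv a b * (mv b c * mv b c) := by
            rw [hq' b c]; group
        _ = mv b c * (mv b c * mv a b * mv b c) * mv b c := by group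
    have F4 := h2 (mv c d (mv b c a)) d (mv c d b)
    rw [hi, hs d (mv c d b)] at F4
    have hP : mv (mv c d b) d (mv c d (mv b c a)) = mv c d a := by
      rw [← h2 b c d]
      simp only [Perm.mul_apply, Perm.inv_def, Equiv.symm_apply_apply]
      have hbc : mv b c (mv b c a) = a := by
        have := Equiv.ext_iff.mp (hq' b c) a
        simpa using this
      rw [hbc]
    calc mv c d * mv a b * (mv c d)⁻¹
        = (mv c d * mv b c * (mv c d)⁻¹) * (mv c d * mv (mv b c a) c * (mv c d)⁻¹) *
          (mv c d * mv b c * (mv c d)⁻¹) := by rw [hab]; group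
      _ = mv (mv c d b) d * mv (mv c d (mv b c a)) d * mv (mv c d b) d := by
          rw [h2 b c d, h2 (mv b c a) c d]
      _ = mv (mv c d a) (mv c d b) := by rw [F4, hP]
  · -- (ii) → (iii)
    intro h2 a b c
    rw [← h2 a b c]
    have e1 : mv b c * mv a b * (mv b c)⁻¹ * mv b c * mv a b
        = mv b c * (mv a b * mv a b) := by group
    rw [e1, hq', mul_one]
  · -- (iii) → (ii)
    intro h3 a b c
    have F := h3 a b c
    have F' : mv (mv b c a) c * (mv b c * mv a b) = mv b c := by
      rw [← mul_assoc]; exact F.symm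
    have F'' := eq_mul_inv_of_mul_eq F'
    rw [F'', mul_inv_rev, hi a b, hi b c]
    group
  · -- (i) → groupoid is a line-preserving subgroup
    intro h1 inf
    have hmul : ∀ p q : Perm Ω, p ∈ ConwayGroupoid mv inf → q ∈ ConwayGroupoid mv inf →
        p * q ∈ ConwayGroupoid mv inf := by
      rintro p q ⟨l, rfl⟩ ⟨m, rfl⟩
      refine ⟨l ++ m.map ⇑(moveSeq mv inf l), ?_⟩
      rw [moveSeq_append, ← moveSeq_apply_start hmv l inf, ← conj_seq h1 l inf m inf]
      group
    refine ⟨⟨⟨⟨⟨ConwayGroupoid mv inf, fun ha hb => hmul _ _ ha hb⟩,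
        ⟨[], rfl⟩⟩, ?_⟩, rfl⟩, ?_⟩
    · -- inverses
      rintro g ⟨l, rfl⟩
      have hpow : ∀ k : ℕ, (moveSeq mv inf l) ^ k ∈ ConwayGroupoid mv inf := by
        intro k
        induction k with
        | zero => exact ⟨[], by rw [pow_zero]; rfl⟩
        | succ k ih => rw [pow_succ]; exact hmul _ _ ih ⟨l, rfl⟩
      have hpos : 0 < orderOf (moveSeq mv inf l) := orderOf_pos _
      have hone : moveSeq mv inf l * (moveSeq mv inf l) ^ (orderOf (moveSeq mv inf l) - 1)
          = 1 := by
        rw [← pow_succ', Nat.sub_add_cancel hpos]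
        exact pow_orderOf_eq_one _
      rw [inv_eq_of_mul_eq_one_right hone]
      exact hpow _
    · rintro g ⟨l, rfl⟩ L hL
      exact seq_preserves hmv hB4 h1 l inf L hL
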